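/- For N = 2n, the move sequence (∏_{k=1}^{n} S j^{2k-1} s J^{2k}) (∏_{k=1}^{n} s j^{2n-2k+1} S J^{2n-2k}) is a valid solution of the peg puzzle consisting of exactly N² + 2N moves, where S (resp. s) denotes a step right by a blue peg (resp. step left by a red peg) and J (resp. j) denotes a jump right by a blue peg (resp. jump left by a red peg). -/

import Mathlib

/-- A cell of the puzzle: a blue peg, a red peg, or an empty hole. -/
inductive Cell
  | B : Cell
  | R : Cell
  | O : Cell
  deriving DecidableEq

open Cell

/-- The four kinds of moves appearing in the explicit solution:
`S` = blue peg steps right, `s` = red peg steps left,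
`J` = blue peg jumps right, `j` = red peg jumps left. -/
inductive Letter
  | S : Letter
  | s : Letter
  | J : Letter
  | j : Letter
  deriving DecidableEq

/-- `MoveRel l c d` : performing move `l` transforms configuration `c` into `d`.
Jumps are over a single adjacent peg into the empty hole. -/
def MoveRel : Letter → List Cell → List Cell → Prop
  | .S, c, d => ∃ x y, c = x ++ B :: O :: y ∧ d = x ++ O :: B :: y
  | .s, c, d => ∃ x y, c = x ++ O :: R :: y ∧ d = x ++ R :: O :: y
  | .J, c, d => ∃ x y p, p ≠ O ∧ c = x ++ B :: p :: O :: y ∧ d = x ++ O :: p :: B :: y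
  | .j, c, d => ∃ x y p, p ≠ O ∧ c = x ++ O :: p :: R :: y ∧ d = x ++ R :: p :: O :: y

/-- `Plays w c d` : the sequence of moves `w`, each legal from the current
configuration, transforms `c` into `d`. -/
def Plays : List Letter → List Cell → List Cell → Prop
  | [], c, d => c = d
  | l :: ls, c, d => ∃ e, MoveRel l c e ∧ Plays ls e d

/-- Initial configuration `BᴺORᴺ`. -/
def startCfg (N : ℕ) : List Cell := List.replicate N B ++ O :: List.replicate N R

/-- Final configuration `RᴺOBᴺ`. -/
def finishCfg (N : ℕ) : List Cell := List.replicate N R ++ O :: List.replicate N B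

/-- The explicit solution sequence for `N = 2n`:
`(∏_{k=1}^{n} S j^{2k-1} s J^{2k}) (∏_{k=1}^{n} s j^{2n-2k+1} S J^{2n-2k})`. -/
def seqEven (n : ℕ) : List Letter :=
  (((List.range n).map (fun k =>
      Letter.S :: (List.replicate (2 * (k + 1) - 1) Letter.j ++
        Letter.s :: List.replicate (2 * (k + 1)) Letter.J))).flatten) ++
  (((List.range n).map (fun k =>
      Letter.s :: (List.replicate (2 * n - 2 * (k + 1) + 1) Letter.j ++
        Letter.S :: List.replicate (2 * n - 2 * (k + 1)) Letter.J))).flatten)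


namespace PegAux

def altRB : ℕ → List Cell
  | 0 => []
  | m+1 => R :: B :: altRB m

def altBR : ℕ → List Cell
  | 0 => []
  | m+1 => B :: R :: altBR m

lemma altRB1 (m : ℕ) : altRB (m+1) = R :: B :: altRB m := rfl
lemma altRB2 (m : ℕ) : altRB (m+2) = R :: B :: R :: B :: altRB m := rfl
lemma altBR1 (m : ℕ) : altBR (m+1) = B :: R :: altBR m := rfl
lemma altBR2 (m : ℕ) : altBR (m+2) = B :: R :: B :: R :: altBR m := rfl

lemma repl1 (x : Cell) (a : ℕ) : List.replicate (a+1) x = x :: List.replicate a x := rfl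
lemma repl2 (x : Cell) (a : ℕ) : List.replicate (a+2) x = x :: x :: List.replicate a x := rfl

lemma repl_mid (x : Cell) (a : ℕ) (t : List Cell) :
    List.replicate a x ++ x :: t = x :: (List.replicate a x ++ t) := by
  induction a with
  | zero => rfl
  | succ k ih => simp [repl1, ih]

lemma altRB_mid (m : ℕ) (t : List Cell) :
    altRB m ++ R :: t = R :: (altBR m ++ t) := by
  induction m with
  | zero => rfl
  | succ k ih => simp [altRB1, altBR1, ih]

lemma altBR_mid (m : ℕ) (t : List Cell) :
    altBR m ++ B :: t = B :: (altRB m ++ t) := by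
  induction m with
  | zero => rfl
  | succ k ih => simp [altRB1, altBR1, ih]

lemma altRB_snoc (m : ℕ) : altRB (m+1) = altRB m ++ [R, B] := by
  induction m with
  | zero => rfl
  | succ k ih => rw [altRB1 (k+1), ih]; simp [altRB_mid, altBR_mid]

lemma altBR_snoc (m : ℕ) : altBR (m+1) = altBR m ++ [B, R] := by
  induction m with
  | zero => rfl
  | succ k ih => rw [altBR1 (k+1), ih]; simp [altRB_mid, altBR_mid]

lemma plays_append {u v : List Letter} {c d e : List Cell}
    (h1 : Plays u c d) (h2 : Plays v d e) : Plays (u ++ v) c e := by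
  induction u generalizing c with
  | nil => cases h1; simpa using h2
  | cons l ls ih =>
      obtain ⟨f, hm, hp⟩ := h1
      exact ⟨f, hm, ih hp⟩

lemma plays_j_rep : ∀ (i : ℕ) (x y : List Cell),
    Plays (List.replicate i Letter.j) (x ++ O :: altBR i ++ y) (x ++ altRB i ++ O :: y) := by
  intro i
  induction i with
  | zero => intro x y; simp [Plays, altRB, altBR]
  | succ k ih =>
      intro x y
      refine ⟨(x ++ [R, B]) ++ O :: altBR k ++ y,
        ⟨x, altBR k ++ y, B, by simp, by simp [altBR1], by simp⟩, ?_⟩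
      have := ih (x ++ [R, B]) y
      simpa [altRB1] using this

lemma plays_J_rep : ∀ (i : ℕ) (x y : List Cell),
    Plays (List.replicate i Letter.J) (x ++ altBR i ++ O :: y) (x ++ O :: altRB i ++ y) := by
  intro i
  induction i with
  | zero => intro x y; simp [Plays, altRB, altBR]
  | succ k ih =>
      intro x y
      refine ⟨(x ++ altBR k) ++ O :: R :: B :: y,
        ⟨x ++ altBR k, y, R, by simp, by rw [altBR_snoc]; simp, by simp⟩, ?_⟩
      have := ih x (R :: B :: y)
      have e : altRB k ++ R :: B :: y = altRB (k+1) ++ y := by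
        rw [altRB_snoc]; simp
      simpa [e] using this

lemma block1 (a b : ℕ) :
    Plays (Letter.S :: (List.replicate (b+1) Letter.j ++ Letter.s :: List.replicate (b+2) Letter.J))
      (List.replicate (a+2) B ++ O :: altRB b ++ List.replicate (a+2) R)
      (List.replicate a B ++ O :: altRB (b+2) ++ List.replicate a R) := by
  refine ⟨List.replicate (a+1) B ++ O :: B :: (altRB b ++ List.replicate (a+2) R),
    ⟨List.replicate (a+1) B, altRB b ++ List.replicate (a+2) R, ?_, rfl⟩, ?_⟩
  · simp [repl1, repl2, repl_mid, altRB_mid, altBR_mid]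
  refine plays_append (d := List.replicate (a+1) B ++ altRB (b+1) ++ O :: List.replicate (a+1) R) ?_ ?_
  · have := plays_j_rep (b+1) (List.replicate (a+1) B) (List.replicate (a+1) R)
    simpa [repl1, repl2, repl_mid, altRB_mid, altBR_mid, altRB1, altBR1] using this
  · refine ⟨List.replicate (a+1) B ++ altRB (b+1) ++ R :: O :: List.replicate a R,
      ⟨List.replicate (a+1) B ++ altRB (b+1), List.replicate a R, ?_, ?_⟩, ?_⟩
    · simp [repl1, repl_mid]
    · simp
    · have := plays_J_rep (b+2) (List.replicate a B) (List.replicate a R)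
      simpa [repl1, repl2, repl_mid, altRB_mid, altBR_mid, altRB1, altBR1, altRB2, altBR2] using this

lemma block2 (c d : ℕ) :
    Plays (Letter.s :: (List.replicate (d+1) Letter.j ++ Letter.S :: List.replicate d Letter.J))
      (List.replicate c R ++ O :: altRB (d+2) ++ List.replicate c B)
      (List.replicate (c+2) R ++ O :: altRB d ++ List.replicate (c+2) B) := by
  refine ⟨List.replicate c R ++ R :: O :: (B :: altRB (d+1) ++ List.replicate c B),
    ⟨List.replicate c R, B :: altRB (d+1) ++ List.replicate c B, ?_, rfl⟩, ?_⟩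
  · simp [altRB2, altRB1]
  refine plays_append (d := List.replicate (c+1) R ++ altRB (d+1) ++ O :: List.replicate (c+1) B) ?_ ?_
  · have := plays_j_rep (d+1) (List.replicate (c+1) R) (List.replicate (c+1) B)
    simpa [repl1, repl2, repl_mid, altRB_mid, altBR_mid, altRB1, altBR1] using this
  · refine ⟨List.replicate (c+1) R ++ altRB d ++ R :: O :: B :: List.replicate (c+1) B,
      ⟨List.replicate (c+1) R ++ altRB d ++ [R], List.replicate (c+1) B, ?_, ?_⟩, ?_⟩
    · rw [altRB_snoc]; simp
    · simp
    · have := plays_J_rep d (List.replicate (c+2) R) (List.replicate (c+2) B)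
      simpa [repl1, repl2, repl_mid, altRB_mid, altBR_mid, altRB1, altBR1, altRB2, altBR2] using this

lemma phase1 (n : ℕ) : ∀ m, m ≤ n →
    Plays (((List.range m).map (fun k =>
        Letter.S :: (List.replicate (2 * (k + 1) - 1) Letter.j ++
          Letter.s :: List.replicate (2 * (k + 1)) Letter.J))).flatten)
      (startCfg (2 * n))
      (List.replicate (2*n - 2*m) B ++ O :: altRB (2*m) ++ List.replicate (2*n - 2*m) R) := by
  intro m
  induction m with
  | zero =>
      intro _
      simp [Plays, startCfg, altRB]
  | succ k ih =>
      intro hk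
      rw [List.range_succ, List.map_append, List.flatten_append]
      refine plays_append (ih (by omega)) ?_
      have h := block1 (2*n - 2*(k+1)) (2*k)
      have e1 : 2*n - 2*(k+1) + 2 = 2*n - 2*k := by omega
      have e2 : 2*k + 2 = 2*(k+1) := by ring
      have e3 : 2*k + 1 = 2*(k+1) - 1 := by omega
      rw [e1, e2, e3] at h
      simpa using h

lemma phase2 (n : ℕ) : ∀ m, m ≤ n →
    Plays (((List.range m).map (fun k =>
        Letter.s :: (List.replicate (2 * n - 2 * (k + 1) + 1) Letter.j ++
          Letter.S :: List.replicate (2 * n - 2 * (k + 1)) Letter.J))).flatten)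
      (O :: altRB (2*n))
      (List.replicate (2*m) R ++ O :: altRB (2*n - 2*m) ++ List.replicate (2*m) B) := by
  intro m
  induction m with
  | zero =>
      intro _
      simp [Plays, altRB]
  | succ k ih =>
      intro hk
      rw [List.range_succ, List.map_append, List.flatten_append]
      refine plays_append (ih (by omega)) ?_
      have h := block2 (2*k) (2*n - 2*(k+1))
      have e1 : 2*n - 2*(k+1) + 2 = 2*n - 2*k := by omega
      have e2 : 2*k + 2 = 2*(k+1) := by ring
      rw [e1, e2] at h
      simpa using h

lemma lens (n : ℕ) : ∀ m, m ≤ n →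
    ((((List.range m).map (fun k =>
        Letter.S :: (List.replicate (2 * (k + 1) - 1) Letter.j ++
          Letter.s :: List.replicate (2 * (k + 1)) Letter.J))).flatten).length +
     (((List.range m).map (fun k =>
        Letter.s :: (List.replicate (2 * n - 2 * (k + 1) + 1) Letter.j ++
          Letter.S :: List.replicate (2 * n - 2 * (k + 1)) Letter.J))).flatten).length)
      = 4 * (n + 1) * m := by
  intro m
  induction m with
  | zero => intro _; simp
  | succ k ih =>
      intro hk
      have hik := ih (by omega)
      obtain ⟨q, rfl⟩ : ∃ q, n = k + 1 + q := ⟨n - (k+1), by omega⟩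
      simp only [List.range_succ, List.map_append, List.flatten_append]
      simp only [List.length_append]
      have l1 : (Letter.S :: (List.replicate (2 * (k + 1) - 1) Letter.j ++
          Letter.s :: List.replicate (2 * (k + 1)) Letter.J)).length = 4*k+5 := by
        simp; omega
      have l2 : (Letter.s :: (List.replicate (2 * (k+1+q) - 2 * (k + 1) + 1) Letter.j ++
          Letter.S :: List.replicate (2 * (k+1+q) - 2 * (k + 1)) Letter.J)).length = 4*q+3 := by
        simp; omega
      have expand : 4 * (k + 1 + q + 1) * (k + 1) = 4 * (k + 1 + q + 1) * k + 4 * (k + 1 + q + 1) := by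
        ring
      simp only [List.flatten, List.append_nil, List.map_cons, List.map_nil] at *
      simp only [List.append_eq, List.append_nil]
      rw [l1, l2, expand]
      linarith [hik]

end PegAux

/-- For `N = 2n`, the sequence
`(∏_{k=1}^{n} S j^{2k-1} s J^{2k}) (∏_{k=1}^{n} s j^{2n-2k+1} S J^{2n-2k})`
is a valid solution of the peg puzzle (every move is legal and it transforms
`BᴺORᴺ` into `RᴺOBᴺ`) consisting of exactly `N² + 2N` moves. -/
theorem even_solution (n : ℕ) (hn : 1 ≤ n) :
    (seqEven n).length = (2 * n) ^ 2 + 2 * (2 * n) ∧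
    Plays (seqEven n) (startCfg (2 * n)) (finishCfg (2 * n)) := by
  constructor
  · have h := PegAux.lens n n le_rfl
    rw [seqEven, List.length_append, h]
    ring
  · have h1 := PegAux.phase1 n n le_rfl
    have h2 := PegAux.phase2 n n le_rfl
    rw [Nat.sub_self] at h1 h2
    simp only [List.replicate_zero, List.nil_append, List.append_nil, PegAux.altRB] at h1 h2
    rw [seqEven]
    exact PegAux.plays_append h1 (by simpa [finishCfg] using h2)
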